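/- A signed graph Σ = (G, σ) on n vertices with connected underlying simple graph G is balanced if and only if D^max(Σ) = D^min(Σ) and the adjacency matrix of the associated signed complete graph K^{D±}(Σ) has largest eigenvalue n − 1; equivalently, if and only if that adjacency matrix has spectrum consisting of n − 1 with multiplicity 1 and −1 with multiplicity n − 1. -/

import Mathlib

open SimpleGraph

/-- The sign (product of edge signs) of a walk in a graph, computed along its darts. -/
def walkSign {V : Type*} {G : SimpleGraph V} (σ : V → V → ℤ) {u v : V} (p : G.Walk u v) : ℤ :=
  (p.darts.map fun d => σ d.toProd.1 d.toProd.2).prod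

/-- `σ` is a signature on `G`: a symmetric function that is `±1`-valued on edges. -/
def IsSignature {V : Type*} (G : SimpleGraph V) (σ : V → V → ℤ) : Prop :=
  (∀ u v, σ u v = σ v u) ∧ ∀ u v, G.Adj u v → σ u v = 1 ∨ σ u v = -1

/-- A signed graph is balanced when every cycle has sign `+1`. -/
def IsBalanced {V : Type*} (G : SimpleGraph V) (σ : V → V → ℤ) : Prop :=
  ∀ (u : V) (p : G.Walk u u), p.IsCycle → walkSign σ p = 1

/-- A walk is a shortest path when it is a path whose length is the graph distance
between its endpoints. -/
def IsShortestPath {V : Type*} {G : SimpleGraph V} {u v : V} (p : G.Walk u v) : Prop :=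
  p.IsPath ∧ p.length = G.dist u v

open scoped Classical in
/-- `σmax u v = +1` if some shortest `u v`-path is positive, `-1` otherwise. -/
noncomputable def sigmaMax {V : Type*} (G : SimpleGraph V) (σ : V → V → ℤ) (u v : V) : ℤ :=
  if ∃ p : G.Walk u v, IsShortestPath p ∧ walkSign σ p = 1 then 1 else -1

open scoped Classical in
/-- `σmin u v = +1` if all shortest `u v`-paths are positive, `-1` otherwise. -/
noncomputable def sigmaMin {V : Type*} (G : SimpleGraph V) (σ : V → V → ℤ) (u v : V) : ℤ :=
  if ∀ p : G.Walk u v, IsShortestPath p → walkSign σ p = 1 then 1 else -1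

/-- The signed distance matrix `D^max`, with `(u,v)` entry `σmax(u,v)·d(u,v)`. -/
noncomputable def Dmax {V : Type*} (G : SimpleGraph V) (σ : V → V → ℤ) : Matrix V V ℝ :=
  Matrix.of fun u v => (sigmaMax G σ u v : ℝ) * (G.dist u v : ℝ)

/-- The signed distance matrix `D^min`, with `(u,v)` entry `σmin(u,v)·d(u,v)`. -/
noncomputable def Dmin {V : Type*} (G : SimpleGraph V) (σ : V → V → ℤ) : Matrix V V ℝ :=
  Matrix.of fun u v => (sigmaMin G σ u v : ℝ) * (G.dist u v : ℝ)

/-- Two vertices are distance-compatible if all shortest paths between them have the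
same sign. -/
def Compatible {V : Type*} (G : SimpleGraph V) (σ : V → V → ℤ) (u v : V) : Prop :=
  ∀ p q : G.Walk u v, IsShortestPath p → IsShortestPath q → walkSign σ p = walkSign σ q

/-- A signed graph is distance-compatible if every pair of vertices is
distance-compatible. -/
def IsCompatibleGraph {V : Type*} (G : SimpleGraph V) (σ : V → V → ℤ) : Prop :=
  ∀ u v, Compatible G σ u v

/-- The largest eigenvalue of a (symmetric) real matrix: the supremum of the set of real
roots of its characteristic polynomial. -/
noncomputable def largestEigenvalue {n : Type*} [Fintype n] [DecidableEq n]
    (M : Matrix n n ℝ) : ℝ :=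
  sSup {x : ℝ | M.charpoly.IsRoot x}

section WalkSign

variable {V : Type*} {G : SimpleGraph V} {σ : V → V → ℤ}

lemma walkSign_nil {u : V} : walkSign σ (Walk.nil : G.Walk u u) = 1 := rfl

lemma walkSign_cons {u v w : V} (h : G.Adj u v) (p : G.Walk v w) :
    walkSign σ (Walk.cons h p) = σ u v * walkSign σ p := by
  simp [walkSign]

lemma walkSign_append {u v w : V} (p : G.Walk u v) (q : G.Walk v w) :
    walkSign σ (p.append q) = walkSign σ p * walkSign σ q := by
  simp [walkSign, Walk.darts_append]

lemma walkSign_reverse (hs : ∀ u v, σ u v = σ v u) {u v : V} (p : G.Walk u v) :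
    walkSign σ p.reverse = walkSign σ p := by
  rw [walkSign, Walk.darts_reverse, List.map_reverse, List.prod_reverse, List.map_map]
  congr 1
  apply List.map_congr_left
  intro d _
  exact (hs d.toProd.1 d.toProd.2).symm

lemma walkSign_mem (hσ : IsSignature G σ) {u v : V} (p : G.Walk u v) :
    walkSign σ p = 1 ∨ walkSign σ p = -1 := by
  induction p with
  | nil => exact Or.inl rfl
  | cons h q ih =>
      rw [walkSign_cons]
      rcases hσ.2 _ _ h with h1 | h1 <;> rcases ih with h2 | h2 <;> simp [h1, h2]

lemma walkSign_mul_self (hσ : IsSignature G σ) {u v : V} (p : G.Walk u v) :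
    walkSign σ p * walkSign σ p = 1 := by
  rcases walkSign_mem hσ p with h | h <;> simp [h]

end WalkSign

section ClosedWalk

variable {V : Type*} {G : SimpleGraph V} {σ : V → V → ℤ}

/-- In a path ending at `u`, the edge `s(u,v)` can occur only as the very last edge. -/
lemma length_eq_one_of_edge_mem {u v : V} (q : G.Walk v u) (hq : q.IsPath) (huv : u ≠ v)
    (he : s(u, v) ∈ q.edges) : q.length = 1 := by
  cases q with
  | nil => simp at he
  | @cons _ x _ h' q' =>
      rw [Walk.edges_cons, List.mem_cons] at he
      rcases he with he | he
      · -- s(u,v) = s(v,x), so u = x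
        have hux : u = x := by
          rw [Sym2.eq_iff] at he
          rcases he with ⟨h1, h2⟩ | ⟨h1, h2⟩
          · exact absurd h1 huv
          · exact h1.symm ▸ rfl
        subst hux
        cases q' with
        | nil => simp
        | @cons _ y _ h'' r =>
            exfalso
            have hmem : u ∈ r.support := r.end_mem_support
            have := hq.2
            simp only [Walk.support_cons, List.nodup_cons] at this
            exact this.2.1 (by simp [hmem])
      · exfalso
        have hmem : v ∈ q'.support := q'.snd_mem_support_of_mem_edges he
        have := hq.2
        simp only [Walk.support_cons, List.nodup_cons] at this
        exact this.1 hmem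

lemma walkSign_closed (hσ : IsSignature G σ) (hb : IsBalanced G σ) :
    ∀ (n : ℕ) (u : V) (c : G.Walk u u), c.length = n → walkSign σ c = 1 := by
  classical
  intro n
  induction n using Nat.strong_induction_on with
  | _ n ih =>
    intro u c hlen
    by_cases hnd : c.support.tail.Nodup
    · -- nodup case
      cases c with
      | nil => rfl
      | @cons _ x _ h d =>
          match n, d, hlen with
          | _, Walk.nil, _ => exact absurd h G.irrefl
          | _, Walk.cons h' (Walk.nil), _ =>
              rw [walkSign_cons, walkSign_cons, walkSign_nil, mul_one]
              have := hσ.1 u x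
              rcases hσ.2 _ _ h with h1 | h1 <;> rw [h1] at this ⊢ <;> rw [← this] <;> norm_num
          | n, Walk.cons h' (Walk.cons h'' d'), hlen =>
              apply hb
              rw [Walk.cons_isCycle_iff]
              have hpath : (Walk.cons h' (Walk.cons h'' d')).IsPath := by
                apply Walk.IsPath.mk'
                simpa using hnd
              refine ⟨hpath, fun hmem => ?_⟩
              have := length_eq_one_of_edge_mem _ hpath (G.ne_of_adj h) hmem
              simp only [Walk.length_cons] at this
              omega
    · -- duplicate vertex: split
      obtain ⟨w, hw2⟩ : ∃ w, 2 ≤ c.support.tail.count w := by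
        by_contra hall
        push_neg at hall
        exact hnd (List.nodup_iff_count_le_one.mpr fun a => by have := hall a; omega)
      have hw : w ∈ c.support :=
        List.mem_of_mem_tail (List.count_pos_iff.mp (by omega))
      set c' := c.rotate w hw with hc'
      have hdartsrot := c.rotate_darts w hw
      have hsign : walkSign σ c' = walkSign σ c :=
        List.Perm.prod_eq (List.Perm.map _ hdartsrot.perm)
      have hlen' : c'.length = n := by
        rw [← hlen, ← Walk.length_darts, ← Walk.length_darts]
        exact hdartsrot.perm.length_eq
      have hcount : 2 ≤ c'.support.tail.count w := by
        rwa [List.Perm.count_eq (c.support_rotate w hw).perm]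
      rw [← hsign]
      -- now c' : Walk w w with w appearing twice in support tail
      clear_value c'
      clear hsign hdartsrot hc' hnd hw2 hw hlen c
      cases c' with
      | nil => rfl
      | @cons _ x _ h d =>
          simp only [Walk.support_cons, List.tail_cons] at hcount
          have hwd : w ∈ d.support := List.count_pos_iff.mp (by omega)
          have hspec := d.take_spec hwd
          set t := d.takeUntil w hwd with ht
          set r := d.dropUntil w hwd with hr
          have hcount_t : t.support.count w = 1 := d.count_support_takeUntil_eq_one hwd
          have hcount_r : 1 ≤ r.support.tail.count w := by
            have : d.support = t.support ++ r.support.tail := by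
              rw [← Walk.support_append, hspec]
            rw [this, List.count_append] at hcount
            omega
          have hrlen : 1 ≤ r.length := by
            by_contra hr0
            push_neg at hr0
            interval_cases hl : r.length
            · have hrnil : r = Walk.nil := Walk.nil_iff_eq_nil.mp (Walk.nil_iff_length_eq.mpr hl)
              rw [hrnil] at hcount_r
              simp at hcount_r
          have hlen_td : t.length + r.length = d.length := by
            rw [← Walk.length_append, hspec]
          have hdlen : d.length + 1 = n := by simpa using hlen'
          have h1 : walkSign σ (Walk.cons h t) = 1 := by
            apply ih (t.length + 1) (by omega) w _ (by simp)
          have h2 : walkSign σ r = 1 := by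
            apply ih r.length (by omega) w r rfl
          rw [← hspec, walkSign_cons, walkSign_append, ← mul_assoc,
            ← walkSign_cons h t, h1, h2, one_mul]

end ClosedWalk

section Balanced

variable {V : Type*} {G : SimpleGraph V} {σ : V → V → ℤ}

lemma walkSign_closed' (hσ : IsSignature G σ) (hb : IsBalanced G σ) {u : V} (c : G.Walk u u) :
    walkSign σ c = 1 :=
  walkSign_closed hσ hb c.length u c rfl

lemma exists_theta (hσ : IsSignature G σ) (hb : IsBalanced G σ) (hG : G.Connected) :
    ∃ θ : V → ℤ, (∀ u, θ u * θ u = 1) ∧ ∀ u v (p : G.Walk u v), walkSign σ p = θ u * θ v := by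
  obtain ⟨v₀⟩ := hG.nonempty
  choose P hP1 hP2 using fun u => (hG.preconnected v₀ u).exists_path_of_dist
  refine ⟨fun u => walkSign σ (P u), fun u => walkSign_mul_self hσ _, ?_⟩
  intro u v p
  have h := walkSign_closed' hσ hb ((P u).append (p.append (P v).reverse))
  rw [walkSign_append, walkSign_append, walkSign_reverse hσ.1] at h
  rcases walkSign_mem hσ (P u) with h1 | h1 <;> rcases walkSign_mem hσ (P v) with h2 | h2 <;>
    · simp only [] at h ⊢ <;> rw [h1, h2] at h ⊢ <;> ring_nf at h ⊢ <;> omega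

lemma sigma_eq_of_balanced (hσ : IsSignature G σ) (hb : IsBalanced G σ) (hG : G.Connected) :
    ∃ θ : V → ℤ, (∀ u, θ u * θ u = 1) ∧
      (∀ u v, sigmaMax G σ u v = θ u * θ v) ∧ (∀ u v, sigmaMin G σ u v = θ u * θ v) := by
  obtain ⟨θ, hθ1, hθ2⟩ := exists_theta hσ hb hG
  have key : ∀ u v : V, sigmaMax G σ u v = θ u * θ v ∧ sigmaMin G σ u v = θ u * θ v := by
    intro u v
    obtain ⟨p₀, hp₀, hl₀⟩ := (hG.preconnected u v).exists_path_of_dist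
    have hs₀ : walkSign σ p₀ = θ u * θ v := hθ2 u v p₀
    constructor
    · rw [sigmaMax]
      split_ifs with hcond
      · obtain ⟨p, _, hp1⟩ := hcond
        rw [← hθ2 u v p, hp1]
      · push_neg at hcond
        have := hcond p₀ ⟨hp₀, hl₀⟩
        rcases walkSign_mem hσ p₀ with h1 | h1
        · exact absurd h1 this
        · rw [← hs₀, h1]
    · rw [sigmaMin]
      split_ifs with hcond
      · rw [← hθ2 u v p₀, hcond p₀ ⟨hp₀, hl₀⟩]
      · push_neg at hcond
        obtain ⟨p, _, hp1⟩ := hcond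
        rcases walkSign_mem hσ p with h1 | h1
        · exact absurd h1 hp1
        · rw [← hθ2 u v p, h1]
  exact ⟨θ, hθ1, fun u v => (key u v).1, fun u v => (key u v).2⟩

lemma dmax_eq_dmin_of_balanced (hσ : IsSignature G σ) (hb : IsBalanced G σ) (hG : G.Connected) :
    Dmax G σ = Dmin G σ := by
  obtain ⟨θ, _, h1, h2⟩ := sigma_eq_of_balanced hσ hb hG
  ext u v
  simp only [Dmax, Dmin, Matrix.of_apply, h1, h2]

end Balanced

section Charpoly

open Polynomial

variable {V : Type*} [Fintype V] [DecidableEq V]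

lemma eval_charpoly (M : Matrix V V ℝ) (s : ℝ) :
    M.charpoly.eval s = (s • (1 : Matrix V V ℝ) - M).det := by
  have hmap := RingHom.map_det (Polynomial.evalRingHom s) M.charmatrix
  simp only [Polynomial.coe_evalRingHom] at hmap
  rw [Matrix.charpoly, hmap]
  congr 1
  ext i j
  by_cases hij : i = j
  · subst hij
    simp [Matrix.charmatrix_apply, Matrix.one_apply]
  · simp [Matrix.charmatrix_apply, Matrix.diagonal_apply_ne _ hij,
      Matrix.one_apply_ne hij, hij]

lemma charpoly_thetaMatrix [Nonempty V] (x : V → ℝ) (hx : ∀ u, x u * x u = 1) :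
    (Matrix.of fun u v => if u = v then (0:ℝ) else x u * x v).charpoly =
      (X - C ((Fintype.card V : ℝ) - 1)) * (X - C (-1)) ^ (Fintype.card V - 1) := by
  have hn1 : 1 ≤ Fintype.card V := Fintype.card_pos
  set n := Fintype.card V with hn
  set M := (Matrix.of fun u v => if u = v then (0:ℝ) else x u * x v) with hM
  have hMeq : M = Matrix.vecMulVec x x - 1 := by
    ext u v
    by_cases h : u = v
    · subst h; simp [hM, Matrix.vecMulVec_apply, hx u]
    · simp [hM, Matrix.vecMulVec_apply, Matrix.one_apply_ne h, h]
  apply Polynomial.eq_of_infinite_eval_eq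
  apply Set.Infinite.mono (s := {(-1 : ℝ)}ᶜ)
  swap
  · exact (Set.finite_singleton (-1)).infinite_compl
  intro s hs
  simp only [Set.mem_compl_iff, Set.mem_singleton_iff] at hs
  have ha : s + 1 ≠ 0 := by intro hcon; apply hs; linarith
  show M.charpoly.eval s = _
  rw [eval_charpoly]
  have h2 : s • (1 : Matrix V V ℝ) - M
      = (s+1) • ((1 : Matrix V V ℝ) + Matrix.replicateCol Unit ((-(s+1)⁻¹) • x) * Matrix.replicateRow Unit x) := by
    ext u v
    by_cases h : u = v
    · subst h
      simp only [hMeq, Matrix.sub_apply, Matrix.smul_apply, Matrix.one_apply_eq,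
        Matrix.vecMulVec_apply, Matrix.add_apply, Matrix.mul_apply, Finset.univ_unique,
        Finset.sum_singleton, Matrix.replicateCol_apply, Matrix.replicateRow_apply, Pi.smul_apply,
        smul_eq_mul]
      field_simp
      ring
    · simp only [hMeq, Matrix.sub_apply, Matrix.smul_apply, Matrix.one_apply_ne h,
        Matrix.vecMulVec_apply, Matrix.add_apply, Matrix.mul_apply, Finset.univ_unique,
        Finset.sum_singleton, Matrix.replicateCol_apply, Matrix.replicateRow_apply, Pi.smul_apply,
        smul_eq_mul]
      field_simp
      ring
  rw [h2, Matrix.det_smul, Matrix.det_one_add_replicateCol_mul_replicateRow]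
  have hdot : dotProduct x ((-(s+1)⁻¹) • x) = -(s+1)⁻¹ * n := by
    simp only [dotProduct, Pi.smul_apply, smul_eq_mul]
    rw [Finset.sum_congr rfl (fun u _ => by rw [mul_comm (x u), mul_assoc, hx u, mul_one])]
    simp [Finset.sum_const, hn]
    ring
  rw [hdot]
  rw [eval_mul, eval_pow, eval_sub, eval_sub, eval_X, eval_C, eval_C]
  have hpow : (s + 1) ^ n = (s + 1) ^ (n - 1) * (s + 1) := by
    conv_lhs => rw [show n = (n - 1) + 1 by omega]
    rw [pow_succ]
  rw [show Fintype.card V = n from hn.symm, hpow]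
  have hss : s - -1 = s + 1 := by ring
  rw [hss]
  field_simp
  ring

lemma roots_thetaMatrix [Nonempty V] (x : V → ℝ) (hx : ∀ u, x u * x u = 1) :
    (Matrix.of fun u v => if u = v then (0:ℝ) else x u * x v).charpoly.roots =
      ((Fintype.card V : ℝ) - 1) ::ₘ Multiset.replicate (Fintype.card V - 1) (-1 : ℝ) := by
  rw [charpoly_thetaMatrix x hx, Polynomial.roots_mul
    (mul_ne_zero (Polynomial.X_sub_C_ne_zero _) (pow_ne_zero _ (Polynomial.X_sub_C_ne_zero _))),
    Polynomial.roots_pow, Polynomial.roots_X_sub_C, Polynomial.roots_X_sub_C,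
    Multiset.nsmul_singleton, Multiset.singleton_add]

lemma largestEigenvalue_of_roots {M : Matrix V V ℝ}
    (h : M.charpoly.roots =
      ((Fintype.card V : ℝ) - 1) ::ₘ Multiset.replicate (Fintype.card V - 1) (-1 : ℝ)) :
    largestEigenvalue M = (Fintype.card V : ℝ) - 1 := by
  have hcp : M.charpoly ≠ 0 := M.charpoly_monic.ne_zero
  have hset : {x : ℝ | M.charpoly.IsRoot x} = {x : ℝ | x ∈ M.charpoly.roots} := by
    ext x
    simp [Polynomial.mem_roots, hcp]
  rw [largestEigenvalue, hset]
  apply IsGreatest.csSup_eq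
  constructor
  · rw [Set.mem_setOf_eq, h]
    exact Multiset.mem_cons_self _ _
  · intro z hz
    rw [Set.mem_setOf_eq, h, Multiset.mem_cons] at hz
    rcases hz with rfl | hz
    · rfl
    · have := Multiset.eq_of_mem_replicate hz
      subst this
      have : (0:ℝ) ≤ (Fintype.card V : ℝ) := Nat.cast_nonneg _
      linarith

end Charpoly

section Spectral

open Polynomial

variable {V : Type*} [Fintype V] [DecidableEq V] {G : SimpleGraph V} {σ : V → V → ℤ}

lemma sigmaMax_one_or_neg_one (G : SimpleGraph V) (σ : V → V → ℤ) (u v : V) :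
    sigmaMax G σ u v = 1 ∨ sigmaMax G σ u v = -1 := by
  rw [sigmaMax]; split_ifs <;> simp

lemma sigmaMax_symm {V : Type*} {G : SimpleGraph V} {σ : V → V → ℤ}
    (hs : ∀ u v, σ u v = σ v u) (u v : V) :
    sigmaMax G σ u v = sigmaMax G σ v u := by
  have hiff : ∀ a b : V, (∃ p : G.Walk a b, IsShortestPath p ∧ walkSign σ p = 1) →
      (∃ p : G.Walk b a, IsShortestPath p ∧ walkSign σ p = 1) := by
    rintro a b ⟨p, ⟨hp1, hp2⟩, hp3⟩
    exact ⟨p.reverse, ⟨hp1.reverse, by rw [Walk.length_reverse, hp2, G.dist_comm]⟩,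
      by rw [walkSign_reverse hs, hp3]⟩
  by_cases h : ∃ p : G.Walk u v, IsShortestPath p ∧ walkSign σ p = 1
  · rw [sigmaMax, if_pos h, sigmaMax, if_pos (hiff u v h)]
  · rw [sigmaMax, if_neg h, sigmaMax, if_neg (fun hc => h (hiff v u hc))]

lemma balanced_of_eig (hσ : IsSignature G σ) (hG : G.Connected)
    (hD : Dmax G σ = Dmin G σ)
    (hEig : largestEigenvalue (Matrix.of fun u v =>
        if u = v then 0 else (sigmaMax G σ u v : ℝ)) = (Fintype.card V : ℝ) - 1) :
    IsBalanced G σ := by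
  classical
  have hne : Nonempty V := hG.nonempty
  have hn1 : 1 ≤ Fintype.card V := Fintype.card_pos
  set n := Fintype.card V with hn
  set M := (Matrix.of fun u v => if u = v then (0:ℝ) else (sigmaMax G σ u v : ℝ)) with hMdef
  have hMapp : ∀ u v, M u v = if u = v then (0:ℝ) else (sigmaMax G σ u v : ℝ) := fun u v => rfl
  have hsym : ∀ u v, M u v = M v u := by
    intro u v
    rw [hMapp, hMapp]
    by_cases h : u = v
    · subst h; rfl
    · rw [if_neg h, if_neg (Ne.symm h), sigmaMax_symm hσ.1]
  have hM : M.IsHermitian := by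
    show Matrix.conjTranspose M = M
    ext u v
    rw [Matrix.conjTranspose_apply, star_trivial, hsym]
  set U : Matrix V V ℝ := ↑hM.eigenvectorUnitary with hUdef
  set e := hM.eigenvalues with hedef
  have hspec : M = U * Matrix.diagonal e * star U := by
    have := hM.spectral_theorem
    rwa [RCLike.ofReal_real_eq_id, Function.id_comp] at this
  have hU1 : U * star U = 1 := Matrix.mem_unitaryGroup_iff.mp hM.eigenvectorUnitary.2
  have hU2 : star U * U = 1 := Matrix.mem_unitaryGroup_iff'.mp hM.eigenvectorUnitary.2
  -- trace identities
  have htr : M.trace = ∑ i, e i := by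
    rw [hspec, Matrix.trace_mul_cycle, hU2, one_mul, Matrix.trace_diagonal]
  have hMM : M * M = U * (Matrix.diagonal fun i => e i * e i) * star U := by
    rw [hspec, ← Matrix.diagonal_mul_diagonal]
    simp only [Matrix.mul_assoc]
    rw [← Matrix.mul_assoc (star U) U, hU2, one_mul]
  have htr2 : (M * M).trace = ∑ i, e i * e i := by
    rw [hMM, Matrix.trace_mul_cycle, hU2, one_mul, Matrix.trace_diagonal]
  have htrM : M.trace = 0 := by
    rw [Matrix.trace]
    apply Finset.sum_eq_zero
    intro u _
    simp [Matrix.diag, hMapp]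
  have htrMM : (M * M).trace = (n:ℝ) * ((n:ℝ) - 1) := by
    rw [Matrix.trace]
    have hterm : ∀ u v : V, M u v * M v u = if u = v then (0:ℝ) else 1 := by
      intro u v
      by_cases h : u = v
      · subst h; simp [hMapp]
      · rw [if_neg h, hMapp, hMapp, if_neg h, if_neg (Ne.symm h),
          sigmaMax_symm hσ.1 v u]
        rcases sigmaMax_one_or_neg_one G σ u v with h1 | h1 <;> rw [h1] <;> norm_num
    have hrow : ∀ u : V, ∑ v, (if u = v then (0:ℝ) else 1) = (n:ℝ) - 1 := by
      intro u
      have : ∀ v : V, (if u = v then (0:ℝ) else 1) = 1 - (if u = v then 1 else 0) := by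
        intro v; split_ifs <;> ring
      rw [Finset.sum_congr rfl fun v _ => this v, Finset.sum_sub_distrib,
        Finset.sum_const, Finset.sum_ite_eq]
      simp [hn]
    calc ∑ u, (M * M).diag u = ∑ u : V, ∑ v : V, M u v * M v u := by
          apply Finset.sum_congr rfl
          intro u _
          rw [Matrix.diag_apply, Matrix.mul_apply]
      _ = ∑ u : V, ((n:ℝ) - 1) := by
          apply Finset.sum_congr rfl
          intro u _
          rw [Finset.sum_congr rfl fun v _ => hterm u v, hrow u]
      _ = (n:ℝ) * ((n:ℝ) - 1) := by
          rw [Finset.sum_const, Finset.card_univ, nsmul_eq_mul]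
  -- the root set is the range of eigenvalues
  have hdet : ∀ s : ℝ, (s • (1:Matrix V V ℝ) - M).det = ∏ i, (s - e i) := by
    intro s
    have h1 : s • (1:Matrix V V ℝ) - M = U * Matrix.diagonal (fun i => s - e i) * star U := by
      have hs1 : s • (1:Matrix V V ℝ) = U * (s • (1:Matrix V V ℝ)) * star U := by
        rw [Matrix.mul_smul, Matrix.mul_one, Matrix.smul_mul, hU1]
      have hdd : (s • (1:Matrix V V ℝ)) - Matrix.diagonal e
          = Matrix.diagonal (fun i => s - e i) := by
        ext i j
        by_cases h : i = j
        · subst h; simp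
        · simp [Matrix.one_apply_ne h, Matrix.diagonal_apply_ne _ h, h]
      calc s • (1:Matrix V V ℝ) - M
          = U * (s • (1:Matrix V V ℝ)) * star U - U * Matrix.diagonal e * star U := by
            rw [← hs1, ← hspec]
        _ = U * ((s • (1:Matrix V V ℝ)) - Matrix.diagonal e) * star U := by
            rw [Matrix.mul_sub, Matrix.sub_mul]
        _ = U * Matrix.diagonal (fun i => s - e i) * star U := by rw [hdd]
    rw [h1, Matrix.det_mul, Matrix.det_mul, Matrix.det_diagonal]
    have hdetU : U.det * (star U).det = 1 := by
      rw [← Matrix.det_mul, hU1, Matrix.det_one]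
    calc U.det * (∏ i, (s - e i)) * (star U).det
        = (∏ i, (s - e i)) * (U.det * (star U).det) := by ring
      _ = ∏ i, (s - e i) := by rw [hdetU, mul_one]
  have hroot : {x : ℝ | M.charpoly.IsRoot x} = Set.range e := by
    ext s
    rw [Set.mem_setOf_eq, IsRoot, eval_charpoly, hdet, Finset.prod_eq_zero_iff]
    constructor
    · rintro ⟨i, _, hi⟩
      exact ⟨i, by linarith [sub_eq_zero.mp hi]⟩
    · rintro ⟨i, hi⟩
      exact ⟨i, Finset.mem_univ i, by rw [hi]; ring⟩
  -- n - 1 is an eigenvalue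
  have hmem : largestEigenvalue M ∈ Set.range e := by
    rw [largestEigenvalue, hroot]
    exact (Set.range_nonempty e).csSup_mem (Set.finite_range e)
  rw [hEig] at hmem
  obtain ⟨i₀, hi₀⟩ := hmem
  -- all other eigenvalues are -1
  have hsum : ∑ i, e i = 0 := by rw [← htr, htrM]
  have hsumsq : ∑ i, e i * e i = (n:ℝ) * ((n:ℝ) - 1) := by rw [← htr2, htrMM]
  have hkey : ∀ i, i ≠ i₀ → e i = -1 := by
    have hs1 : ∑ i ∈ Finset.univ.erase i₀, e i = -((n:ℝ) - 1) := by
      have := Finset.add_sum_erase Finset.univ e (Finset.mem_univ i₀)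
      rw [hsum] at this
      rw [hi₀] at this
      linarith
    have hs2 : ∑ i ∈ Finset.univ.erase i₀, e i * e i
        = (n:ℝ) * ((n:ℝ) - 1) - ((n:ℝ) - 1) * ((n:ℝ) - 1) := by
      have h' := Finset.add_sum_erase Finset.univ (fun i => e i * e i) (Finset.mem_univ i₀)
      rw [hsumsq] at h'
      have h'' : e i₀ * e i₀ + ∑ i ∈ Finset.univ.erase i₀, e i * e i
          = (n:ℝ) * ((n:ℝ) - 1) := h'
      rw [hi₀] at h''
      nlinarith [h'']
    have hcard : ((Finset.univ.erase i₀).card : ℝ) = (n:ℝ) - 1 := by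
      rw [Finset.card_erase_of_mem (Finset.mem_univ i₀), Finset.card_univ,
        Nat.cast_sub hn1, Nat.cast_one]
    have hzero : ∑ i ∈ Finset.univ.erase i₀, (e i + 1) ^ 2 = 0 := by
      have hexp : ∀ i : V, (e i + 1) ^ 2 = e i * e i + 2 * e i + 1 := by intro i; ring
      rw [Finset.sum_congr rfl fun i _ => hexp i]
      rw [Finset.sum_add_distrib, Finset.sum_add_distrib, ← Finset.mul_sum,
        hs1, hs2, Finset.sum_const, nsmul_eq_mul, hcard]
      ring
    intro i hi
    have h0 := (Finset.sum_eq_zero_iff_of_nonneg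
      (fun i _ => sq_nonneg (e i + 1))).mp hzero i (Finset.mem_erase.mpr ⟨hi, Finset.mem_univ i⟩)
    have := pow_eq_zero_iff (n := 2) (by norm_num) |>.mp h0
    linarith
  -- rank-one reconstruction
  have hd' : (fun i => e i + 1) = fun i => if i = i₀ then (n:ℝ) else 0 := by
    funext i
    by_cases h : i = i₀
    · subst h; rw [hi₀]; rw [if_pos rfl]; ring
    · rw [hkey i h, if_neg h]; ring
  have hM1 : ∀ u v, M u v + (if u = v then (1:ℝ) else 0) = (n:ℝ) * (U u i₀ * U v i₀) := by
    intro u v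
    have h1 : M + 1 = U * Matrix.diagonal (fun i => e i + 1) * star U := by
      have : Matrix.diagonal (fun i => e i + 1) = Matrix.diagonal e + 1 := by
        rw [← Matrix.diagonal_one, Matrix.diagonal_add]
      rw [this, Matrix.mul_add, Matrix.add_mul, Matrix.mul_one, hU1, ← hspec]
    have h2 := congrArg (fun A => A u v) h1
    simp only [Matrix.add_apply, Matrix.one_apply] at h2
    rw [h2]
    rw [hd']
    rw [Matrix.mul_apply]
    have hterm : ∀ k, (U * Matrix.diagonal fun i => if i = i₀ then (n:ℝ) else 0) u k
        * (star U) k v = if k = i₀ then (n:ℝ) * (U u i₀ * U v i₀) else 0 := by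
      intro k
      rw [Matrix.mul_diagonal, Matrix.star_apply, star_trivial]
      by_cases h : k = i₀
      · subst h; rw [if_pos rfl, if_pos rfl]; ring
      · rw [if_neg h, if_neg h]; ring
    rw [Finset.sum_congr rfl fun k _ => hterm k, Finset.sum_ite_eq']
    simp
  have hdiag : ∀ u, (n:ℝ) * (U u i₀ * U u i₀) = 1 := by
    intro u
    have := hM1 u u
    rw [if_pos rfl, hMapp, if_pos rfl, zero_add] at this
    linarith
  set θ : V → ℝ := fun u => Real.sqrt n * U u i₀ with hθdef
  have hsq : Real.sqrt (n:ℝ) * Real.sqrt (n:ℝ) = (n:ℝ) := Real.mul_self_sqrt (Nat.cast_nonneg n)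
  have hθ1 : ∀ u, θ u * θ u = 1 := by
    intro u
    calc θ u * θ u = (Real.sqrt n * Real.sqrt n) * (U u i₀ * U u i₀) := by rw [hθdef]; ring
      _ = (n:ℝ) * (U u i₀ * U u i₀) := by rw [hsq]
      _ = 1 := hdiag u
  have hθval : ∀ u, θ u = 1 ∨ θ u = -1 := fun u => mul_self_eq_one_iff.mp (hθ1 u)
  have hoff : ∀ u v, u ≠ v → (sigmaMax G σ u v : ℝ) = θ u * θ v := by
    intro u v huv
    have h1 := hM1 u v
    rw [if_neg huv, add_zero, hMapp, if_neg huv] at h1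
    have hθθ : θ u * θ v = (n:ℝ) * (U u i₀ * U v i₀) := by
      show (Real.sqrt n * U u i₀) * (Real.sqrt n * U v i₀) = _
      have hre : (Real.sqrt n * U u i₀) * (Real.sqrt n * U v i₀)
          = (Real.sqrt n * Real.sqrt n) * (U u i₀ * U v i₀) := by ring
      rw [hre, hsq]
    exact h1.trans hθθ.symm
  set τ : V → ℤ := fun u => if θ u = 1 then 1 else -1 with hτdef
  have hτ : ∀ u, (τ u : ℝ) = θ u := by
    intro u
    rcases hθval u with h | h <;> norm_num [hτdef, h]
  have hτmul : ∀ u, τ u * τ u = 1 := by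
    intro u
    rcases hθval u with h | h <;> norm_num [hτdef, h]
  have hedge : ∀ u v, G.Adj u v → σ u v = τ u * τ v := by
    intro u v hadj
    have huv : u ≠ v := hadj.ne
    have hsm : sigmaMax G σ u v = τ u * τ v := by
      have h1 := hoff u v huv
      rw [← hτ u, ← hτ v, ← Int.cast_mul] at h1
      exact_mod_cast h1
    have hdistR : (G.dist u v : ℝ) ≠ 0 := by
      have := hG.pos_dist_of_ne huv
      positivity
    have hmm : sigmaMin G σ u v = sigmaMax G σ u v := by
      have h0 : Dmax G σ u v = Dmin G σ u v := by rw [hD]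
      simp only [Dmax, Dmin, Matrix.of_apply] at h0
      have := mul_right_cancel₀ hdistR h0
      exact_mod_cast this.symm
    have hdist1 : G.dist u v = 1 := SimpleGraph.dist_eq_one_iff_adj.mpr hadj
    have hp₁ : IsShortestPath (Walk.cons hadj Walk.nil) := by
      constructor
      · rw [Walk.isPath_def]
        simp [huv]
      · simp [hdist1]
    have hsp : walkSign σ (Walk.cons hadj Walk.nil) = σ u v := by
      rw [walkSign_cons, walkSign_nil, mul_one]
    rw [← hsm]
    by_cases hcond : ∃ p : G.Walk u v, IsShortestPath p ∧ walkSign σ p = 1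
    · have h1 : sigmaMax G σ u v = 1 := by rw [sigmaMax, if_pos hcond]
      have h2 : sigmaMin G σ u v = 1 := by rw [hmm, h1]
      have hall : ∀ p : G.Walk u v, IsShortestPath p → walkSign σ p = 1 := by
        by_contra hc
        rw [sigmaMin, if_neg hc] at h2
        norm_num at h2
      rw [h1, ← hsp]
      exact hall _ hp₁
    · have h1 : sigmaMax G σ u v = -1 := by rw [sigmaMax, if_neg hcond]
      push_neg at hcond
      have hnot := hcond _ hp₁
      rcases hσ.2 u v hadj with h | h
      · rw [← hsp] at h; exact absurd h hnot
      · rw [h1, h]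
  have htele : ∀ (a b : V) (p : G.Walk a b), walkSign σ p = τ a * τ b := by
    intro a b p
    induction p with
    | nil => rw [walkSign_nil]; exact (hτmul _).symm
    | @cons a c b h q ih =>
        rw [walkSign_cons, ih, hedge _ _ h]
        linear_combination τ a * τ b * hτmul c
  intro u p _
  rw [htele u u p]
  exact hτmul u

end Spectral

/-- A signed graph `(G, σ)` on `n` vertices with connected underlying
simple graph is balanced if and only if `D^max(Σ) = D^min(Σ)` and the adjacency matrix of
the associated signed complete graph `K^{D±}(Σ)` has largest eigenvalue `n - 1`;
equivalently, if and only if `D^max(Σ) = D^min(Σ)` and that adjacency matrix has spectrum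
`n - 1` with multiplicity `1` and `-1` with multiplicity `n - 1`. -/
theorem balanced_iff_assoc_complete_spectrum {V : Type*} [Fintype V] [DecidableEq V]
    (G : SimpleGraph V) (σ : V → V → ℤ) (hσ : IsSignature G σ) (hG : G.Connected) :
    (IsBalanced G σ ↔
      (Dmax G σ = Dmin G σ ∧
        largestEigenvalue (Matrix.of fun u v =>
            if u = v then 0 else (sigmaMax G σ u v : ℝ)) =
          (Fintype.card V : ℝ) - 1)) ∧
    (IsBalanced G σ ↔
      (Dmax G σ = Dmin G σ ∧
        (Matrix.of fun u v =>
            if u = v then (0 : ℝ) else (sigmaMax G σ u v : ℝ)).charpoly.roots =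
          ((Fintype.card V : ℝ) - 1) ::ₘ
            Multiset.replicate (Fintype.card V - 1) (-1 : ℝ))) := by
  haveI : Nonempty V := hG.nonempty
  have hforward : IsBalanced G σ →
      Dmax G σ = Dmin G σ ∧
      (Matrix.of fun u v =>
          if u = v then (0:ℝ) else (sigmaMax G σ u v : ℝ)).charpoly.roots =
        ((Fintype.card V : ℝ) - 1) ::ₘ
          Multiset.replicate (Fintype.card V - 1) (-1 : ℝ) := by
    intro hb
    refine ⟨dmax_eq_dmin_of_balanced hσ hb hG, ?_⟩
    obtain ⟨θ, hθ1, h1, _⟩ := sigma_eq_of_balanced hσ hb hG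
    have hMx : (Matrix.of fun u v => if u = v then (0:ℝ) else (sigmaMax G σ u v : ℝ))
        = Matrix.of fun u v => if u = v then (0:ℝ) else ((θ u : ℝ)) * ((θ v : ℝ)) := by
      ext u v
      by_cases h : u = v
      · subst h; simp
      · simp only [Matrix.of_apply, if_neg h]
        rw [h1 u v]
        push_cast
        ring
    rw [hMx]
    apply roots_thetaMatrix
    intro u
    exact_mod_cast hθ1 u
  refine ⟨⟨fun hb => ?_, fun h => ?_⟩, ⟨hforward, fun h => ?_⟩⟩
  · obtain ⟨hd, hr⟩ := hforward hb
    exact ⟨hd, largestEigenvalue_of_roots hr⟩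
  · exact balanced_of_eig hσ hG h.1 h.2
  · exact balanced_of_eig hσ hG h.1 (largestEigenvalue_of_roots h.2)
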